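/- Let h₀ ∈ ℂ[[X₁,X₂]] be a formal power series whose image under the substitution X₁ ↦ X, X₂ ↦ X (the diagonal map to ℂ[[X]]) is zero. Then there exists f₀ ∈ ℂ[[X₁,X₂]] with h₀ = (X₂ − X₁)·f₀. -/

import Mathlib

/-- The diagonal substitution `X₁ ↦ X`, `X₂ ↦ X` from `ℂ[[X₁,X₂]]` to `ℂ[[X]]`:
`(Σ h_{ij} X₁ⁱ X₂ʲ) ↦ Σ_n (Σ_{i+j=n} h_{ij}) Xⁿ`. -/
noncomputable def diagSubst (h : MvPowerSeries (Fin 2) ℂ) : PowerSeries ℂ :=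
  PowerSeries.mk fun n => ∑ p ∈ Finset.HasAntidiagonal.antidiagonal n,
    MvPowerSeries.coeff (Finsupp.single (0 : Fin 2) p.1 + Finsupp.single 1 p.2) h

open Finsupp Finset in
private noncomputable def D (i j : ℕ) : Fin 2 →₀ ℕ := Finsupp.single 0 i + Finsupp.single 1 j

private lemma D0 (i j : ℕ) : D i j 0 = i := by simp [D]
private lemma D1 (i j : ℕ) : D i j 1 = j := by simp [D]

private lemma D_eq (m : Fin 2 →₀ ℕ) : m = D (m 0) (m 1) := by
  ext s
  fin_cases s <;> simp [D]

private lemma D_sub1 (i j : ℕ) : D i (j+1) - Finsupp.single 1 1 = D i j := by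
  ext s; fin_cases s <;> simp [D]

private lemma D_sub0 (i j : ℕ) : D (i+1) j - Finsupp.single 0 1 = D i j := by
  ext s; fin_cases s <;> simp [D]

private lemma le_D1 (i j : ℕ) : Finsupp.single (1 : Fin 2) 1 ≤ D i (j+1) := by
  intro s; fin_cases s <;> simp [D]

private lemma le_D0 (i j : ℕ) : Finsupp.single (0 : Fin 2) 1 ≤ D (i+1) j := by
  intro s; fin_cases s <;> simp [D]

private lemma not_le_D1 (i : ℕ) : ¬ Finsupp.single (1 : Fin 2) 1 ≤ D i 0 := by
  intro h; have := h 1; simp [D] at this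

private lemma not_le_D0 (j : ℕ) : ¬ Finsupp.single (0 : Fin 2) 1 ≤ D 0 j := by
  intro h; have := h 0; simp [D] at this


/-- A two-variable power series annihilated by the diagonal substitution is a
multiple of `X₂ − X₁`. -/
theorem ker_diagonal_substitution (h₀ : MvPowerSeries (Fin 2) ℂ)
    (hz : diagSubst h₀ = 0) :
    ∃ f₀ : MvPowerSeries (Fin 2) ℂ,
      h₀ = (MvPowerSeries.X 1 - MvPowerSeries.X 0) * f₀ := by
  set c : ℕ → ℕ → ℂ := fun i j => MvPowerSeries.coeff (D i j) h₀ with hc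
  have hdiag : ∀ n : ℕ, ∑ k ∈ Finset.range (n+1), c k (n - k) = 0 := by
    intro n
    have := congrArg (PowerSeries.coeff n) hz
    rw [diagSubst, PowerSeries.coeff_mk, map_zero] at this
    rw [Finset.Nat.sum_antidiagonal_eq_sum_range_succ_mk] at this
    exact this
  set F : ℕ → ℕ → ℂ := fun a b => ∑ k ∈ Finset.range (a+1), c k (a+b+1-k) with hF
  set f : MvPowerSeries (Fin 2) ℂ := fun m => F (m 0) (m 1) with hf
  have hcoefff : ∀ a b, MvPowerSeries.coeff (D a b) f = F a b := by
    intro a b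
    rw [MvPowerSeries.coeff_apply, hf]
    simp [D0, D1]
  refine ⟨f, ?_⟩
  ext m
  rw [D_eq m]
  set i := m 0; set j := m 1
  have hX1 : MvPowerSeries.coeff (D i j) (MvPowerSeries.X 1 * f) =
      if h : j = 0 then 0 else F i (j-1) := by
    rw [MvPowerSeries.X_def, MvPowerSeries.coeff_monomial_mul]
    rcases Nat.eq_zero_or_eq_succ_pred j with hj | hj
    · rw [dif_pos hj, if_neg]; rw [hj]; exact not_le_D1 i
    · rw [dif_neg (by omega), if_pos, one_mul]
      · rw [hj, D_sub1, hcoefff, Nat.succ_sub_one]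
      · rw [hj]; exact le_D1 i _
  have hX0 : MvPowerSeries.coeff (D i j) (MvPowerSeries.X 0 * f) =
      if h : i = 0 then 0 else F (i-1) j := by
    rw [MvPowerSeries.X_def, MvPowerSeries.coeff_monomial_mul]
    rcases Nat.eq_zero_or_eq_succ_pred i with hi | hi
    · rw [dif_pos hi, if_neg]; rw [hi]; exact not_le_D0 j
    · rw [dif_neg (by omega), if_pos, one_mul]
      · rw [hi, D_sub0, hcoefff, Nat.succ_sub_one]
      · rw [hi]; exact le_D0 _ j
  rw [sub_mul, map_sub, hX1, hX0]
  show c i j = _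
  rcases Nat.eq_zero_or_eq_succ_pred j with hj | hj
  · rcases Nat.eq_zero_or_eq_succ_pred i with hi | hi
    · rw [dif_pos hj, dif_pos hi, hi, hj]
      have := hdiag 0
      simp only [zero_add, Finset.sum_range_one] at this
      simpa using this
    · rw [dif_pos hj, dif_neg (by omega), hj]
      have := hdiag i
      rw [Finset.sum_range_succ] at this
      have h2 : F (i-1) 0 = ∑ k ∈ Finset.range i, c k (i - k) := by
        show (∑ k ∈ Finset.range (i-1+1), c k (i-1+0+1-k)) = _
        rw [show i - 1 + 1 = i by omega]
      rw [Nat.sub_self] at this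
      rw [h2]
      linear_combination this
  · rcases Nat.eq_zero_or_eq_succ_pred i with hi | hi
    · rw [dif_neg (by omega), dif_pos hi, hi]
      simp only [hF, zero_add, Finset.sum_range_one, sub_zero, Nat.sub_zero]
      rw [show j - 1 + 1 = j by omega]
    · rw [dif_neg (by omega), dif_neg (by omega)]
      simp only [hF]
      rw [show i - 1 + 1 = i by omega]
      rw [Finset.sum_range_succ]
      have e1 : ∀ k, i + (j-1) + 1 - k = i - 1 + j + 1 - k := by intro k; omega
      have e2 : i + (j-1) + 1 - i = j := by omega
      rw [e2]
      have : (∑ k ∈ Finset.range i, c k (i + (j-1)+1 - k)) =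
          ∑ k ∈ Finset.range i, c k (i-1+j+1-k) := by
        apply Finset.sum_congr rfl; intro k _; rw [e1]
      rw [this]; ring
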